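/- Fix u ∈ ℝ and δ > 0, and define f(x,y) = ((u²+1)y)/((x-u)² + y²) for x ∈ ℝ, y > 0. Then for every integer ℓ ≥ 0, the differential operator D = iy·∂/∂x + y·∂/∂y applied to g_ℓ(x,y) := f(x,y)^δ · (((x-u)-iy)/((x-u)+iy))^ℓ yields D g_ℓ = δ · f^δ · (((x-u)-iy)/((x-u)+iy))^{ℓ+1} + ℓ · f^δ · (((x-u)-iy)/((x-u)+iy))^ℓ · (-2iy/((x-u)+iy)). -/

import Mathlib

noncomputable def poissonKer (u x y : ℝ) : ℝ := ((u ^ 2 + 1) * y) / ((x - u) ^ 2 + y ^ 2)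

noncomputable def qFactor (u x y : ℝ) : ℂ :=
  (((x : ℂ) - u) - Complex.I * y) / (((x : ℂ) - u) + Complex.I * y)

noncomputable def gFun (u δ : ℝ) (ℓ : ℕ) (x y : ℝ) : ℂ :=
  ((poissonKer u x y ^ δ : ℝ) : ℂ) * qFactor u x y ^ ℓ

open Complex

-- denominator nonzero
lemma hM_ne (u x y : ℝ) (hy : 0 < y) : (((x : ℂ) - u) + Complex.I * y) ≠ 0 := by
  intro h
  have := congrArg Complex.im h
  simp at this
  linarith

-- x-derivative of P
lemma hPx (u x y : ℝ) (hy : 0 < y) :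
    HasDerivAt (fun x' => poissonKer u x' y)
      ((-(((u^2+1)*y) * (2*(x-u)))) / (((x-u)^2+y^2)^2)) x := by
  have hd : (0:ℝ) < (x-u)^2 + y^2 := by positivity
  have h1 : HasDerivAt (fun x' : ℝ => (x'-u)^2 + y^2) (2*(x-u)) x := by
    have := (((hasDerivAt_id x).sub_const u).pow 2).add_const (y^2)
    simpa using this
  have := (hasDerivAt_const x ((u^2+1)*y)).div h1 hd.ne'
  simpa [poissonKer, Pi.div_def] using this

-- y-derivative of P
lemma hPy (u x y : ℝ) (hy : 0 < y) :
    HasDerivAt (fun y' => poissonKer u x y')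
      ((((u^2+1)) * ((x-u)^2+y^2) - ((u^2+1)*y) * (2*y)) / (((x-u)^2+y^2)^2)) y := by
  have hd : (0:ℝ) < (x-u)^2 + y^2 := by positivity
  have h1 : HasDerivAt (fun y' : ℝ => (x-u)^2 + y'^2) (2*y) y := by
    have := ((hasDerivAt_id y).pow 2).const_add ((x-u)^2)
    simpa using this
  have h2 : HasDerivAt (fun y' : ℝ => (u^2+1)*y') (u^2+1) y := by
    simpa using (hasDerivAt_id y).const_mul (u^2+1)
  have := h2.div h1 hd.ne'
  simpa [poissonKer, Pi.div_def] using this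

-- x-derivative of q
lemma hqx (u x y : ℝ) (hy : 0 < y) :
    HasDerivAt (fun x' : ℝ => qFactor u x' y)
      ((2 * Complex.I * y) / ((((x : ℂ) - u) + Complex.I * y)^2)) x := by
  have hX : HasDerivAt (fun x' : ℝ => ((x' : ℂ))) 1 x := by
    simpa using (hasDerivAt_id x).ofReal_comp
  have hn : HasDerivAt (fun x' : ℝ => ((x' : ℂ) - u) - Complex.I * y) 1 x :=
    (hX.sub_const _).sub_const _
  have hm : HasDerivAt (fun x' : ℝ => ((x' : ℂ) - u) + Complex.I * y) 1 x :=
    (hX.sub_const _).add_const _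
  have := hn.div hm (hM_ne u x y hy)
  have h2 := this
  exact h2.congr_deriv (by ring)

-- y-derivative of q
lemma hqy (u x y : ℝ) (hy : 0 < y) :
    HasDerivAt (fun y' : ℝ => qFactor u x y')
      ((-2 * Complex.I * ((x:ℂ)-u)) / ((((x : ℂ) - u) + Complex.I * y)^2)) y := by
  have hY : HasDerivAt (fun y' : ℝ => ((y' : ℂ))) 1 y := by
    simpa using (hasDerivAt_id y).ofReal_comp
  have hn : HasDerivAt (fun y' : ℝ => ((x : ℂ) - u) - Complex.I * y') (-Complex.I) y := by
    have := ((hY.const_mul Complex.I)).const_sub ((x:ℂ) - u)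
    simpa using this
  have hm : HasDerivAt (fun y' : ℝ => ((x : ℂ) - u) + Complex.I * y') Complex.I y := by
    have := ((hY.const_mul Complex.I)).const_add ((x:ℂ) - u)
    simpa using this
  have := hn.div hm (hM_ne u x y hy)
  exact this.congr_deriv (by ring)

theorem raising_operator_formula (u δ : ℝ) (hδ : 0 < δ) (ℓ : ℕ) (x y : ℝ) (hy : 0 < y) :
    Complex.I * (y : ℂ) * deriv (fun x' : ℝ => gFun u δ ℓ x' y) x +
      (y : ℂ) * deriv (fun y' : ℝ => gFun u δ ℓ x y') y =
    (δ : ℂ) * ((poissonKer u x y ^ δ : ℝ) : ℂ) * qFactor u x y ^ (ℓ + 1) +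
      (ℓ : ℂ) * ((poissonKer u x y ^ δ : ℝ) : ℂ) * qFactor u x y ^ ℓ *
        (-2 * Complex.I * y / (((x : ℂ) - u) + Complex.I * y)) := by
  have hd : (0:ℝ) < (x-u)^2 + y^2 := by positivity
  have hP : 0 < poissonKer u x y := by
    unfold poissonKer; positivity
  have hM := hM_ne u x y hy
  -- x-derivative of gFun
  have hAx : HasDerivAt (fun x' => ((poissonKer u x' y ^ δ : ℝ) : ℂ))
      (((-(((u^2+1)*y) * (2*(x-u)))) / (((x-u)^2+y^2)^2) * δ * poissonKer u x y ^ (δ-1) : ℝ) : ℂ) x :=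
    (((hPx u x y hy).rpow_const (Or.inl hP.ne')).ofReal_comp)
  have hQx : HasDerivAt (fun x' => qFactor u x' y ^ ℓ)
      ((ℓ : ℂ) * qFactor u x y ^ (ℓ-1) * ((2 * Complex.I * y) / ((((x : ℂ) - u) + Complex.I * y)^2))) x := by
    have := (hasDerivAt_pow ℓ (qFactor u x y)).comp x (hqx u x y hy)
    simpa [Function.comp_def, mul_assoc] using this
  have hgx : deriv (fun x' : ℝ => gFun u δ ℓ x' y) x =
      (((-(((u^2+1)*y) * (2*(x-u)))) / (((x-u)^2+y^2)^2) * δ * poissonKer u x y ^ (δ-1) : ℝ) : ℂ)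
        * qFactor u x y ^ ℓ
      + ((poissonKer u x y ^ δ : ℝ) : ℂ) *
        ((ℓ : ℂ) * qFactor u x y ^ (ℓ-1) * ((2 * Complex.I * y) / ((((x : ℂ) - u) + Complex.I * y)^2))) :=
    (hAx.mul hQx).deriv
  -- y-derivative of gFun
  have hAy : HasDerivAt (fun y' => ((poissonKer u x y' ^ δ : ℝ) : ℂ))
      ((((((u^2+1)) * ((x-u)^2+y^2) - ((u^2+1)*y) * (2*y)) / (((x-u)^2+y^2)^2)) * δ * poissonKer u x y ^ (δ-1) : ℝ) : ℂ) y :=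
    (((hPy u x y hy).rpow_const (Or.inl hP.ne')).ofReal_comp)
  have hQy : HasDerivAt (fun y' => qFactor u x y' ^ ℓ)
      ((ℓ : ℂ) * qFactor u x y ^ (ℓ-1) * ((-2 * Complex.I * ((x:ℂ)-u)) / ((((x : ℂ) - u) + Complex.I * y)^2))) y := by
    have := (hasDerivAt_pow ℓ (qFactor u x y)).comp y (hqy u x y hy)
    simpa [Function.comp_def, mul_assoc] using this
  have hgy : deriv (fun y' : ℝ => gFun u δ ℓ x y') y =
      ((((((u^2+1)) * ((x-u)^2+y^2) - ((u^2+1)*y) * (2*y)) / (((x-u)^2+y^2)^2)) * δ * poissonKer u x y ^ (δ-1) : ℝ) : ℂ)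
        * qFactor u x y ^ ℓ
      + ((poissonKer u x y ^ δ : ℝ) : ℂ) *
        ((ℓ : ℂ) * qFactor u x y ^ (ℓ-1) * ((-2 * Complex.I * ((x:ℂ)-u)) / ((((x : ℂ) - u) + Complex.I * y)^2))) :=
    (hAy.mul hQy).deriv
  rw [hgx, hgy]
  -- rewrite P^(δ-1)
  have hPδ1 : poissonKer u x y ^ (δ-1) = poissonKer u x y ^ δ / poissonKer u x y := by
    rw [Real.rpow_sub hP, Real.rpow_one]
  rw [hPδ1]
  have hPc : ((poissonKer u x y : ℝ) : ℂ) ≠ 0 := by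
    exact_mod_cast hP.ne'
  -- Key identity 1
  have K1 : (Complex.I * y * ((-(((u^2+1)*y) * (2*(x-u)))) / (((x-u)^2+y^2)^2) : ℝ)
      + (y:ℂ) * ((((((u^2+1)) * ((x-u)^2+y^2) - ((u^2+1)*y) * (2*y)) / (((x-u)^2+y^2)^2)) : ℝ))
      ) / ((poissonKer u x y : ℝ) : ℂ) = qFactor u x y := by
    rw [poissonKer, qFactor]
    have hdc : (((x:ℂ)-u)^2 + (y:ℂ)^2) ≠ 0 := by
      have : (((x-u)^2 + y^2 : ℝ) : ℂ) ≠ 0 := by exact_mod_cast hd.ne'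
      push_cast at this; exact this
    have hyc : (y:ℂ) ≠ 0 := by exact_mod_cast hy.ne'
    have huc : ((u:ℂ)^2 + 1) ≠ 0 := by
      have h0 : (0:ℝ) < u^2+1 := by positivity
      have : ((u^2+1 : ℝ):ℂ) ≠ 0 := by exact_mod_cast h0.ne'
      push_cast at this; exact this
    push_cast
    field_simp
    linear_combination (-2 * ((x:ℂ)-u) * (y:ℂ)^2) * Complex.I_mul_I
  -- Key identity 2
  have K2 : Complex.I * y * ((2 * Complex.I * y) / ((((x : ℂ) - u) + Complex.I * y)^2))
      + (y:ℂ) * ((-2 * Complex.I * ((x:ℂ)-u)) / ((((x : ℂ) - u) + Complex.I * y)^2))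
      = qFactor u x y * (-2 * Complex.I * y / (((x : ℂ) - u) + Complex.I * y)) := by
    rw [qFactor]
    field_simp
    ring
  rcases Nat.eq_zero_or_pos ℓ with hl | hl
  · subst hl
    push_cast at K1 ⊢
    simp only [pow_zero, Nat.cast_zero, zero_mul, mul_zero, zero_add, add_zero, mul_one,
      Nat.zero_sub, pow_zero]
    linear_combination ((δ:ℂ) * ((poissonKer u x y ^ δ : ℝ) : ℂ)) * K1
  · obtain ⟨k, rfl⟩ : ∃ k, ℓ = k + 1 := ⟨ℓ - 1, (Nat.succ_pred_eq_of_pos hl).symm⟩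
    simp only [Nat.add_sub_cancel]
    push_cast at K1 ⊢
    linear_combination ((δ:ℂ) * ((poissonKer u x y ^ δ : ℝ) : ℂ) * qFactor u x y ^ (k+1)) * K1
      + (((poissonKer u x y ^ δ : ℝ) : ℂ) * ((k:ℂ)+1) * qFactor u x y ^ k) * K2
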